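/- Let m, n ≥ 3 be integers, let K = ℚ(cos(π/m), cos(π/n)) and k = ℚ(cos(2π/m), cos(2π/n), cos(π/m)·cos(π/n)) as subfields of ℝ, and let G_{m,n} be the subgroup of SL(2,ℝ) generated by A = [[1, 2cos(π/m) + 2cos(π/n)], [0, 1]] and B = [[2cos(π/m), 1], [−1, 0]]. If K ≠ k, then no nonzero element of k is a parabolic fixed point of G_{m,n}. -/

import Mathlib

open Real Matrix

/-- A matrix in SL(2,ℝ) is parabolic if it is not ±I and has trace of absolute value 2. -/
def IsParabolicMat (M : Matrix (Fin 2) (Fin 2) ℝ) : Prop :=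
  M ≠ 1 ∧ M ≠ -1 ∧ |Matrix.trace M| = 2

/-- The Möbius action of `M` fixes the real number `z`. -/
def MoebiusFixes (M : Matrix (Fin 2) (Fin 2) ℝ) (z : ℝ) : Prop :=
  M 0 0 * z + M 0 1 = (M 1 0 * z + M 1 1) * z

section Helpers
variable (k : Subfield ℝ) (x : ℝ)

/-- `r` lies in the odd part `x·k`. -/
def IsOddPart (r : ℝ) : Prop := ∃ b ∈ k, r = x * b

variable {k x}

lemma oddP_zero : IsOddPart k x 0 := ⟨0, k.zero_mem, by ring⟩

lemma oddP_add {a b : ℝ} (ha : IsOddPart k x a) (hb : IsOddPart k x b) :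
    IsOddPart k x (a + b) := by
  obtain ⟨a0, ha0, rfl⟩ := ha; obtain ⟨b0, hb0, rfl⟩ := hb
  exact ⟨a0 + b0, k.add_mem ha0 hb0, by ring⟩

lemma oddP_neg {a : ℝ} (ha : IsOddPart k x a) : IsOddPart k x (-a) := by
  obtain ⟨a0, ha0, rfl⟩ := ha
  exact ⟨-a0, k.neg_mem ha0, by ring⟩

lemma evenP_mul_oddP {a b : ℝ} (ha : a ∈ k) (hb : IsOddPart k x b) :
    IsOddPart k x (a * b) := by
  obtain ⟨b0, hb0, rfl⟩ := hb
  exact ⟨a * b0, k.mul_mem ha hb0, by ring⟩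

lemma oddP_mul_evenP {a b : ℝ} (ha : IsOddPart k x a) (hb : b ∈ k) :
    IsOddPart k x (a * b) := by
  obtain ⟨a0, ha0, rfl⟩ := ha
  exact ⟨a0 * b, k.mul_mem ha0 hb, by ring⟩

lemma oddP_mul_oddP (hx2 : x ^ 2 ∈ k) {a b : ℝ} (ha : IsOddPart k x a)
    (hb : IsOddPart k x b) : a * b ∈ k := by
  obtain ⟨a0, ha0, rfl⟩ := ha; obtain ⟨b0, hb0, rfl⟩ := hb
  have h : x * a0 * (x * b0) = x ^ 2 * (a0 * b0) := by ring
  rw [h]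
  exact k.mul_mem hx2 (k.mul_mem ha0 hb0)

end Helpers

theorem stmt8 (m n : ℕ) (hm : 3 ≤ m) (hn : 3 ≤ n)
    (A B : Matrix.SpecialLinearGroup (Fin 2) ℝ)
    (hA : (A : Matrix (Fin 2) (Fin 2) ℝ) =
      !![1, 2 * Real.cos (Real.pi / (m : ℝ)) + 2 * Real.cos (Real.pi / (n : ℝ)); 0, 1])
    (hB : (B : Matrix (Fin 2) (Fin 2) ℝ) =
      !![2 * Real.cos (Real.pi / (m : ℝ)), 1; -1, 0])
    (K k : Subfield ℝ)
    (hK : K = Subfield.closure ({Real.cos (Real.pi / (m : ℝ)),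
      Real.cos (Real.pi / (n : ℝ))} : Set ℝ))
    (hk : k = Subfield.closure ({Real.cos (2 * Real.pi / (m : ℝ)),
      Real.cos (2 * Real.pi / (n : ℝ)),
      Real.cos (Real.pi / (m : ℝ)) * Real.cos (Real.pi / (n : ℝ))} : Set ℝ))
    (hne : K ≠ k) :
    ∀ α : ℝ, α ∈ k → α ≠ 0 →
      ¬ ∃ P ∈ Subgroup.closure ({A, B} : Set (Matrix.SpecialLinearGroup (Fin 2) ℝ)),
        IsParabolicMat (P : Matrix (Fin 2) (Fin 2) ℝ) ∧
          MoebiusFixes (P : Matrix (Fin 2) (Fin 2) ℝ) α := by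
  intro α hαk hα0
  rintro ⟨P, hPmem, ⟨hP1, hPm1, hPtr⟩, hPfix⟩
  set x : ℝ := Real.cos (Real.pi / (m : ℝ)) with hxdef
  set y : ℝ := Real.cos (Real.pi / (n : ℝ)) with hydef
  have hm0 : (m : ℝ) ≠ 0 := by positivity
  have hn0 : (n : ℝ) ≠ 0 := by positivity
  have hm2 : (2 : ℝ) < m := by exact_mod_cast lt_of_lt_of_le (by norm_num) hm
  have hxpos : 0 < x := by
    apply Real.cos_pos_of_mem_Ioo
    constructor
    · have h : 0 < Real.pi / (m : ℝ) := by positivity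
      linarith [Real.pi_pos]
    · exact div_lt_div_of_pos_left Real.pi_pos (by norm_num) hm2
  have hx0 : x ≠ 0 := ne_of_gt hxpos
  have hc2m : Real.cos (2 * Real.pi / (m : ℝ)) = 2 * x ^ 2 - 1 := by
    have h : 2 * Real.pi / (m : ℝ) = 2 * (Real.pi / (m : ℝ)) := by ring
    rw [h, Real.cos_two_mul]
  have hc2n : Real.cos (2 * Real.pi / (n : ℝ)) = 2 * y ^ 2 - 1 := by
    have h : 2 * Real.pi / (n : ℝ) = 2 * (Real.pi / (n : ℝ)) := by ring
    rw [h, Real.cos_two_mul]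
  have h2k : (2 : ℝ) ∈ k := by
    have h : (2 : ℝ) = 1 + 1 := by norm_num
    rw [h]; exact k.add_mem k.one_mem k.one_mem
  have hxyk : x * y ∈ k := by
    rw [hk]; exact Subfield.subset_closure (by simp)
  have hc2mk : (2 * x ^ 2 - 1 : ℝ) ∈ k := by
    rw [← hc2m, hk]; exact Subfield.subset_closure (by simp)
  have hx2k : x ^ 2 ∈ k := by
    have h : x ^ 2 = ((2 * x ^ 2 - 1) + 1) / 2 := by ring
    rw [h]
    exact k.div_mem (k.add_mem hc2mk k.one_mem) h2k
  -- x ∉ k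
  have hxnk : x ∉ k := by
    intro hxk
    apply hne
    apply le_antisymm
    · rw [hK]
      apply Subfield.closure_le.2
      rintro z hz
      rcases hz with rfl | hz
      · exact hxk
      · rw [Set.mem_singleton_iff] at hz
        subst hz
        have hz2 : y = x * y / x := by field_simp
        rw [hz2]
        exact k.div_mem hxyk hxk
    · rw [hk, hK]
      apply Subfield.closure_le.2
      have hxK : x ∈ Subfield.closure ({x, y} : Set ℝ) := Subfield.subset_closure (by simp)
      have hyK : y ∈ Subfield.closure ({x, y} : Set ℝ) := Subfield.subset_closure (by simp)
      have h2K : (2 : ℝ) ∈ Subfield.closure ({x, y} : Set ℝ) := by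
        have h : (2 : ℝ) = 1 + 1 := by norm_num
        rw [h]; exact Subfield.add_mem _ (Subfield.one_mem _) (Subfield.one_mem _)
      rintro z hz
      rcases hz with rfl | hz
      · rw [hc2m]
        exact Subfield.sub_mem _ (Subfield.mul_mem _ h2K (by
          rw [sq]; exact Subfield.mul_mem _ hxK hxK)) (Subfield.one_mem _)
      · rw [Set.mem_insert_iff, Set.mem_singleton_iff] at hz
        rcases hz with rfl | rfl
        · rw [hc2n]
          exact Subfield.sub_mem _ (Subfield.mul_mem _ h2K (by
            rw [sq]; exact Subfield.mul_mem _ hyK hyK)) (Subfield.one_mem _)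
        · exact Subfield.mul_mem _ hxK hyK
  -- y is in the odd part
  have hyodd : IsOddPart k x y := by
    refine ⟨x * y / x ^ 2, k.div_mem hxyk hx2k, ?_⟩
    field_simp
  -- the parity invariant for elements of the group
  have key : ∀ Q : Matrix.SpecialLinearGroup (Fin 2) ℝ,
      Q ∈ Subgroup.closure ({A, B} : Set (Matrix.SpecialLinearGroup (Fin 2) ℝ)) →
      ((Q : Matrix (Fin 2) (Fin 2) ℝ) 0 0 ∈ k ∧ (Q : Matrix (Fin 2) (Fin 2) ℝ) 1 1 ∈ k ∧
        IsOddPart k x ((Q : Matrix (Fin 2) (Fin 2) ℝ) 0 1) ∧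
        IsOddPart k x ((Q : Matrix (Fin 2) (Fin 2) ℝ) 1 0)) ∨
      (IsOddPart k x ((Q : Matrix (Fin 2) (Fin 2) ℝ) 0 0) ∧
        IsOddPart k x ((Q : Matrix (Fin 2) (Fin 2) ℝ) 1 1) ∧
        (Q : Matrix (Fin 2) (Fin 2) ℝ) 0 1 ∈ k ∧ (Q : Matrix (Fin 2) (Fin 2) ℝ) 1 0 ∈ k) := by
    intro Q hQ
    induction hQ using Subgroup.closure_induction with
    | mem g hg =>
      rcases hg with rfl | hg
      · left
        rw [hA]
        refine ⟨by simpa using k.one_mem, by simpa using k.one_mem, ?_,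
          by simpa using (oddP_zero : IsOddPart k x 0)⟩
        obtain ⟨t, htk, hyt⟩ := hyodd
        refine ⟨2 + 2 * t, k.add_mem h2k (k.mul_mem h2k htk), ?_⟩
        have he : (!![1, 2 * x + 2 * y; 0, 1] : Matrix (Fin 2) (Fin 2) ℝ) 0 1
            = 2 * x + 2 * y := by simp
        rw [he, hyt]; ring
      · rw [Set.mem_singleton_iff] at hg
        subst hg
        right
        rw [hB]
        refine ⟨⟨2, h2k, by simp [mul_comm]⟩, ⟨0, k.zero_mem, by simp⟩,
          by simpa using k.one_mem, by simpa using k.neg_mem k.one_mem⟩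
    | one =>
      left
      have h1 : ((1 : Matrix.SpecialLinearGroup (Fin 2) ℝ) : Matrix (Fin 2) (Fin 2) ℝ)
          = !![1, 0; 0, 1] := by
        rw [Matrix.SpecialLinearGroup.coe_one, Matrix.one_fin_two]
      rw [h1]
      exact ⟨by simpa using k.one_mem, by simpa using k.one_mem,
        by simpa using (oddP_zero : IsOddPart k x 0),
        by simpa using (oddP_zero : IsOddPart k x 0)⟩
    | mul g h hg hh ihg ihh =>
      have hmul : ∀ i j : Fin 2, ((g * h : Matrix.SpecialLinearGroup (Fin 2) ℝ) :
          Matrix (Fin 2) (Fin 2) ℝ) i j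
          = (g : Matrix (Fin 2) (Fin 2) ℝ) i 0 * (h : Matrix (Fin 2) (Fin 2) ℝ) 0 j
            + (g : Matrix (Fin 2) (Fin 2) ℝ) i 1 * (h : Matrix (Fin 2) (Fin 2) ℝ) 1 j := by
        intro i j
        rw [Matrix.SpecialLinearGroup.coe_mul, Matrix.mul_apply, Fin.sum_univ_two]
      rcases ihg with ⟨ha, hd, hb, hc⟩ | ⟨ha, hd, hb, hc⟩ <;>
        rcases ihh with ⟨ha', hd', hb', hc'⟩ | ⟨ha', hd', hb', hc'⟩
      · left
        refine ⟨?_, ?_, ?_, ?_⟩ <;> rw [hmul]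
        · exact k.add_mem (k.mul_mem ha ha') (oddP_mul_oddP hx2k hb hc')
        · exact k.add_mem (oddP_mul_oddP hx2k hc hb') (k.mul_mem hd hd')
        · exact oddP_add (evenP_mul_oddP ha hb') (oddP_mul_evenP hb hd')
        · exact oddP_add (oddP_mul_evenP hc ha') (evenP_mul_oddP hd hc')
      · right
        refine ⟨?_, ?_, ?_, ?_⟩ <;> rw [hmul]
        · exact oddP_add (evenP_mul_oddP ha ha') (oddP_mul_evenP hb hc')
        · exact oddP_add (oddP_mul_evenP hc hb') (evenP_mul_oddP hd hd')
        · exact k.add_mem (k.mul_mem ha hb') (oddP_mul_oddP hx2k hb hd')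
        · exact k.add_mem (oddP_mul_oddP hx2k hc ha') (k.mul_mem hd hc')
      · right
        refine ⟨?_, ?_, ?_, ?_⟩ <;> rw [hmul]
        · exact oddP_add (oddP_mul_evenP ha ha') (evenP_mul_oddP hb hc')
        · exact oddP_add (evenP_mul_oddP hc hb') (oddP_mul_evenP hd hd')
        · exact k.add_mem (oddP_mul_oddP hx2k ha hb') (k.mul_mem hb hd')
        · exact k.add_mem (k.mul_mem hc ha') (oddP_mul_oddP hx2k hd hc')
      · left
        refine ⟨?_, ?_, ?_, ?_⟩ <;> rw [hmul]
        · exact k.add_mem (oddP_mul_oddP hx2k ha ha') (k.mul_mem hb hc')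
        · exact k.add_mem (k.mul_mem hc hb') (oddP_mul_oddP hx2k hd hd')
        · exact oddP_add (oddP_mul_evenP ha hb') (evenP_mul_oddP hb hd')
        · exact oddP_add (evenP_mul_oddP hc ha') (oddP_mul_evenP hd hc')
    | inv g hg ihg =>
      have hinv : ((g⁻¹ : Matrix.SpecialLinearGroup (Fin 2) ℝ) : Matrix (Fin 2) (Fin 2) ℝ)
          = !![(g : Matrix (Fin 2) (Fin 2) ℝ) 1 1, -(g : Matrix (Fin 2) (Fin 2) ℝ) 0 1;
              -(g : Matrix (Fin 2) (Fin 2) ℝ) 1 0, (g : Matrix (Fin 2) (Fin 2) ℝ) 0 0] := by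
        rw [Matrix.SpecialLinearGroup.coe_inv, Matrix.adjugate_fin_two]
      rcases ihg with ⟨ha, hd, hb, hc⟩ | ⟨ha, hd, hb, hc⟩
      · left
        rw [hinv]
        exact ⟨by simpa using hd, by simpa using ha, by simpa using oddP_neg hb,
          by simpa using oddP_neg hc⟩
      · right
        rw [hinv]
        exact ⟨by simpa using hd, by simpa using ha, by simpa using k.neg_mem hb,
          by simpa using k.neg_mem hc⟩
  -- express P as an explicit 2x2 matrix
  obtain ⟨a, b, c, d, hP'⟩ : ∃ a b c d, (P : Matrix (Fin 2) (Fin 2) ℝ) = !![a, b; c, d] :=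
    ⟨_, _, _, _, Matrix.eta_fin_two _⟩
  have hkey := key P hPmem
  rw [hP'] at hkey hP1 hPm1 hPtr hPfix
  simp only [show ∀ u v w z : ℝ, (!![u, v; w, z] : Matrix (Fin 2) (Fin 2) ℝ) 0 0 = u from
      fun _ _ _ _ => rfl,
    show ∀ u v w z : ℝ, (!![u, v; w, z] : Matrix (Fin 2) (Fin 2) ℝ) 0 1 = v from
      fun _ _ _ _ => rfl,
    show ∀ u v w z : ℝ, (!![u, v; w, z] : Matrix (Fin 2) (Fin 2) ℝ) 1 0 = w from
      fun _ _ _ _ => rfl,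
    show ∀ u v w z : ℝ, (!![u, v; w, z] : Matrix (Fin 2) (Fin 2) ℝ) 1 1 = z from
      fun _ _ _ _ => rfl] at hkey
  have hdet : a * d - b * c = 1 := by
    have h := P.2
    rw [hP', Matrix.det_fin_two_of] at h
    exact h
  have htr : a + d = 2 ∨ a + d = -2 := by
    have h2 : |a + d| = 2 := by
      rw [Matrix.trace_fin_two_of] at hPtr
      exact hPtr
    rcases (abs_eq (by norm_num : (0:ℝ) ≤ 2)).1 h2 with h | h
    · exact Or.inl h
    · exact Or.inr h
  have hfix : a * α + b = (c * α + d) * α := by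
    have h := hPfix
    exact h
  rcases hkey with ⟨hak, hdk, ⟨b0, hb0k, hb0⟩, ⟨c0, hc0k, hc0⟩⟩ |
      ⟨⟨a0, ha0k, ha0⟩, ⟨d0, hd0k, hd0⟩, hbk, hck⟩
  · -- even diagonal case
    have h1 : x * (b0 - c0 * α ^ 2) = (d - a) * α := by
      rw [hb0, hc0] at hfix
      linear_combination hfix
    have hbc0 : b0 - c0 * α ^ 2 = 0 := by
      by_contra h
      apply hxnk
      have hx_eq : x = (d - a) * α / (b0 - c0 * α ^ 2) := by
        rw [eq_div_iff h]
        linarith [h1]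
      rw [hx_eq]
      exact k.div_mem (k.mul_mem (k.sub_mem hdk hak) hαk)
        (k.sub_mem hb0k (k.mul_mem hc0k (by rw [sq]; exact k.mul_mem hαk hαk)))
    have had : a = d := by
      have h0 : (d - a) * α = 0 := by rw [← h1, hbc0]; ring
      rcases mul_eq_zero.1 h0 with h | h
      · linarith
      · exact absurd h hα0
    have had1 : a * d = 1 := by
      rcases htr with h | h
      · have ha1 : a = 1 := by linarith
        have hd1 : d = 1 := by linarith
        rw [ha1, hd1]; norm_num
      · have ha1 : a = -1 := by linarith
        have hd1 : d = -1 := by linarith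
        rw [ha1, hd1]; norm_num
    have hbc' : b0 * c0 = 0 := by
      have h3 : b * c = x ^ 2 * (b0 * c0) := by rw [hb0, hc0]; ring
      have h4 : b * c = 0 := by linear_combination had1 - hdet
      rw [h3] at h4
      exact (mul_eq_zero.1 h4).resolve_left (pow_ne_zero 2 hx0)
    have hb0z : b0 = 0 := by
      rcases mul_eq_zero.1 hbc' with h | h
      · exact h
      · linear_combination hbc0 + α ^ 2 * h
    have hc0z : c0 = 0 := by
      have h5 : c0 * α ^ 2 = 0 := by linear_combination hb0z - hbc0
      rcases mul_eq_zero.1 h5 with h | h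
      · exact h
      · exact absurd h (pow_ne_zero 2 hα0)
    have hbz : b = 0 := by rw [hb0, hb0z]; ring
    have hcz : c = 0 := by rw [hc0, hc0z]; ring
    rcases htr with h | h
    · apply hP1
      have ha1 : a = 1 := by linarith [had]
      have hd1 : d = 1 := by linarith [had]
      rw [ha1, hbz, hcz, hd1, ← Matrix.one_fin_two]
    · apply hPm1
      have ha1 : a = -1 := by linarith [had]
      have hd1 : d = -1 := by linarith [had]
      rw [ha1, hbz, hcz, hd1]
      have hm1 : (-1 : Matrix (Fin 2) (Fin 2) ℝ) = !![-1, 0; 0, -1] := by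
        have := Matrix.one_fin_two (α := ℝ)
        rw [show (-1 : Matrix (Fin 2) (Fin 2) ℝ) = -(1 : Matrix (Fin 2) (Fin 2) ℝ) from rfl,
          this]
        ext i j
        fin_cases i <;> fin_cases j <;> simp
      rw [hm1]
  · -- odd diagonal case: trace would be in x·k, impossible
    have htrx : a + d = x * (a0 + d0) := by rw [ha0, hd0]; ring
    have ha0d0 : a0 + d0 ≠ 0 := by
      intro h
      rcases htr with h' | h' <;> rw [htrx, h, mul_zero] at h' <;> norm_num at h'
    apply hxnk
    have hx_eq : x = (a + d) / (a0 + d0) := by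
      rw [htrx]; field_simp
    rw [hx_eq]
    rcases htr with h' | h' <;> rw [h']
    · exact k.div_mem h2k (k.add_mem ha0k hd0k)
    · exact k.div_mem (k.neg_mem h2k) (k.add_mem ha0k hd0k)
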